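/- Let V be any vertex algebra, let W be a V-module and let k ≥ 2. Then u_{-k} C_k(W) ⊆ C_{k+1}(W) for every u ∈ V. -/
import Mathlib


open scoped DirectSum

noncomputable section


/-- Integer binomial coefficient `C(m, i)` for `m : ℤ`, `i : ℕ`. -/
def intBinom (m : ℤ) (i : ℕ) : ℤ :=
  (∏ j ∈ Finset.range i, (m - (j : ℤ))) / (i.factorial : ℤ)

/-- A vertex algebra over `ℂ`: a complex vector space `V` with a vacuum vector and a
linear state-field correspondence `Y`, `Y(v,x) = ∑ₙ vₙ x^{-n-1}`, satisfying
truncation, vacuum and creation properties, and Borcherds' commutator and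
iterate formulas. -/
structure VertexAlgebra (V : Type*) [AddCommGroup V] [Module ℂ V] where
  /-- the coefficients of vertex operators: `Y u n v = uₙ v`. -/
  Y : V →ₗ[ℂ] ℤ → Module.End ℂ V
  /-- the vacuum vector `𝟏`. -/
  vac : V
  trunc : ∀ u v : V, ∃ N : ℕ, ∀ n : ℤ, (N : ℤ) ≤ n → Y u n v = 0
  vac_act : ∀ (n : ℤ) (v : V), Y vac n v = if n = -1 then v else 0
  create : ∀ u : V, Y u (-1) vac = u
  create_nonneg : ∀ (u : V) (n : ℤ), 0 ≤ n → Y u n vac = 0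
  commutator : ∀ (u v w : V) (m n : ℤ),
    Y u m (Y v n w) - Y v n (Y u m w)
      = ∑ᶠ i : ℕ, intBinom m i • Y (Y u i v) (m + n - i) w
  iterate : ∀ (u v w : V) (m n : ℤ),
    Y (Y u m v) n w
      = ∑ᶠ i : ℕ, ((-1 : ℤ) ^ i * intBinom m i) •
          (Y u (m - i) (Y v (n + i) w)
            - ((((-1 : ℤˣ) ^ m : ℤˣ) : ℤ) • Y v (m + n - i) (Y u i w)))

/-- A module for a vertex algebra. -/
structure VAModule {V : Type*} [AddCommGroup V] [Module ℂ V] (va : VertexAlgebra V)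
    (W : Type*) [AddCommGroup W] [Module ℂ W] where
  /-- the action `act v n w = vₙ w`. -/
  act : V →ₗ[ℂ] ℤ → Module.End ℂ W
  trunc : ∀ (v : V) (w : W), ∃ N : ℕ, ∀ n : ℤ, (N : ℤ) ≤ n → act v n w = 0
  vac_act : ∀ (n : ℤ) (w : W), act va.vac n w = if n = -1 then w else 0
  commutator : ∀ (u v : V) (w : W) (m n : ℤ),
    act u m (act v n w) - act v n (act u m w)
      = ∑ᶠ i : ℕ, intBinom m i • act (va.Y u i v) (m + n - i) w
  iterate : ∀ (u v : V) (w : W) (m n : ℤ),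
    act (va.Y u m v) n w
      = ∑ᶠ i : ℕ, ((-1 : ℤ) ^ i * intBinom m i) •
          (act u (m - i) (act v (n + i) w)
            - ((((-1 : ℤˣ) ^ m : ℤˣ) : ℤ) • act v (m + n - i) (act u i w)))

variable {V : Type*} [AddCommGroup V] [Module ℂ V]

/-- The adjoint module of a vertex algebra. -/
def VertexAlgebra.adjoint (va : VertexAlgebra V) : VAModule va V where
  act := va.Y
  trunc := va.trunc
  vac_act := va.vac_act
  commutator := va.commutator
  iterate := va.iterate

variable {W : Type*} [AddCommGroup W] [Module ℂ W]

/-- `Efilt M n = E_n(W)`: the subspace of `W` spanned by the vectors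
`u⁽¹⁾_{-1-k₁} ⋯ u⁽ʳ⁾_{-1-k_r} w` for `r ≥ 1`, `u⁽ⁱ⁾ ∈ V`, `w ∈ W`, `kᵢ ≥ 0`,
`k₁ + ⋯ + k_r ≥ n`. -/
def Efilt {va : VertexAlgebra V} (M : VAModule va W) (n : ℤ) : Submodule ℂ W :=
  Submodule.span ℂ {x : W | ∃ (L : List (V × ℕ)) (w : W), L ≠ [] ∧
    n ≤ (L.map fun p => ((p.2 : ℤ))).sum ∧
    x = L.foldr (fun p acc => M.act p.1 (-1 - (p.2 : ℤ)) acc) w}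

/-- `Cfilt M n = C_n(W)`: the subspace of `W` spanned by the vectors `v_{-n} w`. -/
def Cfilt {va : VertexAlgebra V} (M : VAModule va W) (n : ℕ) : Submodule ℂ W :=
  Submodule.span ℂ {x : W | ∃ (v : V) (w : W), x = M.act v (-(n : ℤ)) w}

/-! ### Auxiliary lemmas -/

lemma aux_prod_neg_one (i : ℕ) :
    (∏ j ∈ Finset.range i, ((-1 : ℤ) - (j : ℤ))) = (-1) ^ i * (i.factorial : ℤ) := by
  induction i with
  | zero => simp
  | succ n ih =>
      rw [Finset.prod_range_succ, ih, pow_succ, Nat.factorial_succ]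
      push_cast
      ring

lemma aux_prod_neg_two (i : ℕ) :
    (∏ j ∈ Finset.range i, ((-2 : ℤ) - (j : ℤ))) = (-1) ^ i * ((i + 1).factorial : ℤ) := by
  induction i with
  | zero => simp
  | succ n ih =>
      rw [Finset.prod_range_succ, ih]
      have h2 : (((n + 1) + 1).factorial : ℤ) = ((n : ℤ) + 2) * ((n + 1).factorial : ℤ) := by
        rw [Nat.factorial_succ (n + 1)]
        push_cast
        ring
      rw [h2, pow_succ]
      push_cast
      ring

lemma intBinom_neg_one (i : ℕ) : intBinom (-1) i = (-1) ^ i := by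
  unfold intBinom
  rw [aux_prod_neg_one]
  exact Int.mul_ediv_cancel _ (by exact_mod_cast i.factorial_pos.ne')

lemma intBinom_neg_two (i : ℕ) : intBinom (-2) i = (-1) ^ i * ((i : ℤ) + 1) := by
  unfold intBinom
  rw [aux_prod_neg_two, Nat.factorial_succ]
  push_cast
  rw [show (-1 : ℤ) ^ i * (((i : ℤ) + 1) * (i.factorial : ℤ))
      = ((-1) ^ i * ((i : ℤ) + 1)) * (i.factorial : ℤ) by ring]
  exact Int.mul_ediv_cancel _ (by exact_mod_cast i.factorial_pos.ne')

lemma aux_units_neg_one : ((((-1 : ℤˣ) ^ (-1 : ℤ) : ℤˣ)) : ℤ) = -1 := by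
  decide

lemma aux_units_neg_two : ((((-1 : ℤˣ) ^ (-2 : ℤ) : ℤˣ)) : ℤ) = 1 := by
  decide

lemma aux_neg_one_pow_sq (i : ℕ) : ((-1 : ℤ) ^ i) * ((-1 : ℤ) ^ i) = 1 := by
  rw [← pow_add]
  exact Even.neg_one_pow ⟨i, rfl⟩

section aux
variable {va : VertexAlgebra V} (M : VAModule va W)

/-- The `D`-operator lemma: `(v₋₂𝟏)₋₁₋ₘ w = (m+1) • v₋₂₋ₘ w`. -/
lemma aux_D (v : V) (w : W) (m : ℕ) :
    M.act (va.Y v (-2) va.vac) (-1 - (m : ℤ)) w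
      = ((m : ℤ) + 1) • M.act v (-2 - (m : ℤ)) w := by
  rw [M.iterate]
  rw [finsum_eq_single _ m ?_]
  · have h1 : M.act va.vac (-1 - (m : ℤ) + (m : ℤ)) w = w := by
      rw [M.vac_act]; simp
    have h2 : M.act va.vac (-2 + (-1 - (m : ℤ)) - (m : ℤ)) (M.act v m w) = 0 := by
      rw [M.vac_act]
      have : (-2 + (-1 - (m : ℤ)) - (m : ℤ)) ≠ -1 := by omega
      simp [this]
    rw [h1, h2, aux_units_neg_two, intBinom_neg_two, smul_zero, sub_zero]
    rw [show (-1 : ℤ) ^ m * ((-1) ^ m * ((m : ℤ) + 1))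
        = ((-1) ^ m * (-1) ^ m) * ((m : ℤ) + 1) by ring,
      aux_neg_one_pow_sq, one_mul]
  · intro i hi
    have h1 : M.act va.vac (-1 - (m : ℤ) + (i : ℤ)) w = 0 := by
      rw [M.vac_act]
      have : (-1 - (m : ℤ) + (i : ℤ)) ≠ -1 := by omega
      simp [this]
    have h2 : M.act va.vac (-2 + (-1 - (m : ℤ)) - (i : ℤ)) (M.act v i w) = 0 := by
      rw [M.vac_act]
      have : (-2 + (-1 - (m : ℤ)) - (i : ℤ)) ≠ -1 := by omega
      simp [this]
    rw [h1, h2, (M.act v _).map_zero, smul_zero, sub_zero, smul_zero]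

lemma aux_lower (K : ℕ) (hK : 1 ≤ K) (N : ℕ) (v : V) (w : W) :
    M.act v (-(K : ℤ) - (N : ℤ)) w ∈ Cfilt M K := by
  obtain ⟨K', rfl⟩ := Nat.exists_eq_add_of_le hK
  induction N generalizing v w with
  | zero =>
      apply Submodule.subset_span
      exact ⟨v, w, by norm_num⟩
  | succ n ih =>
      have hD := aux_D M v w (K' + n)
      have hidx : -((1 + K' : ℕ) : ℤ) - ((n + 1 : ℕ) : ℤ) = -2 - ((K' + n : ℕ) : ℤ) := by
        push_cast; ring
      have hidx2 : (-1 : ℤ) - ((K' + n : ℕ) : ℤ) = -((1 + K' : ℕ) : ℤ) - (n : ℤ) := by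
        push_cast; ring
      have hne : ((K' : ℂ) + (n : ℂ) + 1) ≠ 0 := by
        exact_mod_cast Nat.succ_ne_zero (K' + n)
      have hval : M.act v (-((1 + K' : ℕ) : ℤ) - ((n + 1 : ℕ) : ℤ)) w
          = ((((K' + n : ℕ) : ℂ) + 1))⁻¹
            • M.act (va.Y v (-2) va.vac) (-1 - ((K' + n : ℕ) : ℤ)) w := by
        rw [hD, hidx]
        rw [← Int.cast_smul_eq_zsmul ℂ]
        rw [smul_smul]
        push_cast
        rw [inv_mul_cancel₀ hne, one_smul]
      rw [hval]
      apply Submodule.smul_mem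
      rw [hidx2]
      exact ih _ _

lemma aux_act_mem (K : ℕ) (hK : 1 ≤ K) (v : V) (w : W) (n : ℤ) (hn : n ≤ -(K : ℤ)) :
    M.act v n w ∈ Cfilt M K := by
  obtain ⟨N, hN⟩ : ∃ N : ℕ, n = -(K : ℤ) - (N : ℤ) := ⟨(-n - K).toNat, by omega⟩
  rw [hN]
  exact aux_lower M K hK N v w

lemma aux_finsum_mem {S : Submodule ℂ W} (f : ℕ → W) (N : ℕ)
    (h0 : ∀ i, N ≤ i → f i = 0) (hS : ∀ i, f i ∈ S) : (∑ᶠ i, f i) ∈ S := by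
  rw [finsum_eq_sum_of_support_subset f (s := Finset.range N) ?_]
  · exact Submodule.sum_mem _ fun i _ => hS i
  · intro i hi
    simp only [Function.mem_support] at hi
    simp only [Finset.coe_range, Set.mem_Iio]
    by_contra h
    exact hi (h0 i (by omega))

lemma aux_act_act_mem (K : ℕ) (hK : 1 ≤ K) (u v : V) (w : W) (m n : ℤ)
    (hn : n ≤ -(K : ℤ)) (hmn : m + n ≤ -(K : ℤ)) :
    M.act u m (M.act v n w) ∈ Cfilt M K := by
  have hc : M.act u m (M.act v n w)
      = (∑ᶠ i : ℕ, intBinom m i • M.act (va.Y u i v) (m + n - i) w)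
        + M.act v n (M.act u m w) := by
    exact eq_add_of_sub_eq (M.commutator u v w m n)
  rw [hc]
  apply Submodule.add_mem
  · obtain ⟨N, hN⟩ := va.trunc u v
    refine aux_finsum_mem (S := Cfilt M K) _ N ?_ ?_
    · intro i hi
      rw [hN i (by exact_mod_cast hi), map_zero]
      simp
    · intro i
      exact zsmul_mem (aux_act_mem M K hK _ _ _ (by omega)) _
  · exact aux_act_mem M K hK v _ n hn

end aux

/-- **Lemma 3.3 (lmorecn).** Let `V` be any vertex algebra, `W` a `V`-module and
`k ≥ 2`. Then `u_{-k} C_k(W) ⊆ C_{k+1}(W)` for every `u ∈ V`. -/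
theorem stmt7 {V : Type*} [AddCommGroup V] [Module ℂ V] {W : Type*} [AddCommGroup W]
    [Module ℂ W] (va : VertexAlgebra V) (M : VAModule va W) (k : ℕ) (hk : 2 ≤ k)
    (u : V) : ∀ w ∈ Cfilt M k, M.act u (-(k : ℤ)) w ∈ Cfilt M (k + 1) := by
  intro w0 hw0
  induction hw0 using Submodule.span_induction with
  | mem x hx =>
      obtain ⟨v, w, rfl⟩ := hx
      obtain ⟨k', rfl⟩ : ∃ k', k = k' + 2 := ⟨k - 2, by omega⟩
      clear hk
      set K : ℕ := k' + 2 with hK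
      set a : ℕ := k' + 1 with ha
      -- the iterate formula with `m = -1`, `n = 1 - 2K`
      set T : ℕ → W := fun i =>
        ((-1 : ℤ) ^ i * intBinom (-1) i) •
          (M.act u ((-1 : ℤ) - i) (M.act v ((1 - 2 * (K : ℤ)) + i) w)
            - ((((-1 : ℤˣ) ^ (-1 : ℤ) : ℤˣ) : ℤ) •
                M.act v ((-1 : ℤ) + (1 - 2 * (K : ℤ)) - i) (M.act u i w))) with hT
      have hiter : M.act (va.Y u (-1) v) (1 - 2 * (K : ℤ)) w = ∑ᶠ i, T i :=
        M.iterate u v w (-1) (1 - 2 * (K : ℤ))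
      have hTi : ∀ i : ℕ, T i
          = M.act u ((-1 : ℤ) - i) (M.act v ((1 - 2 * (K : ℤ)) + i) w)
            + M.act v ((-1 : ℤ) + (1 - 2 * (K : ℤ)) - i) (M.act u i w) := by
        intro i
        rw [hT]
        simp only [intBinom_neg_one, aux_units_neg_one, aux_neg_one_pow_sq, one_smul,
          neg_smul, one_smul, sub_neg_eq_add]
      -- support bound
      obtain ⟨N₁, hN₁⟩ := M.trunc v w
      obtain ⟨N₂, hN₂⟩ := M.trunc u w
      set B : ℕ := N₁ + N₂ + 2 * K + 2 with hB
      have h0 : ∀ i, B ≤ i → T i = 0 := by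
        intro i hi
        rw [hTi i, hN₁ _ (by push_cast; omega), hN₂ _ (by push_cast; omega)]
        rw [(M.act u _).map_zero, (M.act v _).map_zero, add_zero]
      have hsum : (∑ᶠ i, T i) = ∑ i ∈ Finset.range B, T i := by
        apply finsum_eq_sum_of_support_subset
        intro i hi
        simp only [Function.mem_support] at hi
        simp only [Finset.coe_range, Set.mem_Iio]
        by_contra h
        exact hi (h0 i (by omega))
      -- split off the `i = a` term
      set target : W := M.act u (-(K : ℤ)) (M.act v (-(K : ℤ)) w) with htarget
      set g : ℕ → W := fun i =>
        if i = a then M.act v ((-1 : ℤ) + (1 - 2 * (K : ℤ)) - a) (M.act u a w)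
        else T i with hg
      have hTa : ∀ i, T i = (if i = a then target else 0) + g i := by
        intro i
        by_cases h : i = a
        · rw [hTi i, h]
          simp only [hg, if_pos rfl, htarget]
          have e1 : (-1 : ℤ) - (a : ℤ) = -(K : ℤ) := by omega
          have e2 : (1 - 2 * (K : ℤ)) + (a : ℤ) = -(K : ℤ) := by omega
          rw [e1, e2]
          simp
        · simp [hg, h]
      have hsplit : (∑ i ∈ Finset.range B, T i)
          = target + ∑ i ∈ Finset.range B, g i := by
        rw [Finset.sum_congr rfl (fun i _ => hTa i), Finset.sum_add_distrib]
        congr 1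
        rw [Finset.sum_ite_eq' (Finset.range B) a (fun _ => target)]
        simp only [Finset.mem_range]
        rw [if_pos (by omega)]
      -- memberships
      have hKk : (1 : ℕ) ≤ K + 1 := by omega
      have hmem_sum : (∑ i ∈ Finset.range B, T i) ∈ Cfilt M (K + 1) := by
        rw [← hsum, ← hiter]
        exact aux_act_mem M (K + 1) hKk _ _ _ (by push_cast; omega)
      have hmem_g : (∑ i ∈ Finset.range B, g i) ∈ Cfilt M (K + 1) := by
        apply Submodule.sum_mem
        intro i _
        by_cases h : i = a
        · simp only [hg, if_pos h]
          exact aux_act_mem M (K + 1) hKk _ _ _ (by push_cast; omega)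
        · simp only [hg, if_neg h]
          rw [hTi i]
          apply Submodule.add_mem
          · by_cases hik : K ≤ i
            · exact aux_act_mem M (K + 1) hKk _ _ _ (by push_cast; omega)
            · have hia : i ≤ k' := by omega
              exact aux_act_act_mem M (K + 1) hKk u v w _ _
                (by simp only [hK] at *; push_cast; omega)
                (by simp only [hK] at *; push_cast; omega)
          · exact aux_act_mem M (K + 1) hKk _ _ _ (by push_cast; omega)
      have : target = (∑ i ∈ Finset.range B, T i) - ∑ i ∈ Finset.range B, g i := by
        rw [hsplit]
        abel
      rw [this]
      exact Submodule.sub_mem _ hmem_sum hmem_g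
  | zero => simp only [map_zero]; exact Submodule.zero_mem _
  | add x y _ _ hx hy =>
      rw [map_add]
      exact Submodule.add_mem _ hx hy
  | smul c x _ hx =>
      rw [map_smul]
      exact Submodule.smul_mem _ c hx

end
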